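/- Let q = n1 - n2 with 0 ≤ n2 < n1 and fix m1, m2, r. For Lebesgue-almost every coefficient array γ = (γ_{ik}) ∈ ℂ^{q × n1}, the following holds: every family A_1, …, A_{n1} of complex m1 × m2 matrices, each of rank at most r, that satisfies γ_{i1} A_1 + γ_{i2} A_2 + ⋯ + γ_{i n1} A_{n1} = 0 for all i = 1,…,q, also satisfies dim C(A_1, A_2, …, A_{n1}) ≤ n2 · r. -/

import Mathlib

open MeasureTheory Module Submodule Set Matrix

-- measure part
theorem aux_ae_li (n : ℕ) : ∀ (k : ℕ), k ≤ n →
    ∀ᵐ v : Fin k → (Fin n → ℂ), LinearIndependent ℂ v := by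
  intro k
  induction k with
  | zero => intro _; exact Filter.Eventually.of_forall fun v => linearIndependent_empty_type
  | succ k ih =>
    intro hk
    have IH := ih (Nat.le_of_succ_le hk)
    set V := Fin n → ℂ
    -- the bad set
    have hopen : IsOpen { f : Fin (k+1) → V | LinearIndependent ℂ f } :=
      isOpen_setOf_linearIndependent
    rw [MeasureTheory.ae_iff]
    have hcont : Continuous (fun z : V × (Fin k → V) => (Fin.cons z.1 z.2 : Fin (k+1) → V)) := by
      refine continuous_pi fun j => ?_
      refine Fin.cases ?_ ?_ j
      · simpa using continuous_fst.comp continuous_id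
      · intro i
        simpa [Function.comp_def] using (continuous_apply i).comp continuous_snd
    have hTopen : IsOpen { z : V × (Fin k → V) | LinearIndependent ℂ (Fin.cons z.1 z.2 : Fin (k+1) → V) } :=
      hopen.preimage hcont
    -- transfer along piFinSuccAbove
    have mp := MeasureTheory.volume_preserving_piFinSuccAbove (fun _ : Fin (k+1) => V) 0
    have hSet : {f : Fin (k+1) → V | ¬ LinearIndependent ℂ f} =
        (MeasurableEquiv.piFinSuccAbove (fun _ : Fin (k+1) => V) 0) ⁻¹'
          { z : V × (Fin k → V) | ¬ LinearIndependent ℂ (Fin.cons z.1 z.2 : Fin (k+1) → V) } := by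
      ext f
      simp only [Set.mem_preimage, Set.mem_setOf_eq, MeasurableEquiv.piFinSuccAbove,
        MeasurableEquiv.coe_mk, Fin.insertNthEquiv_zero, Fin.consEquiv_symm_apply,
        Fin.cons_self_tail]
    rw [hSet, mp.measure_preimage]
    · -- prod measure of bad set is zero
      have hTmeas : MeasurableSet { z : V × (Fin k → V) |
          ¬ LinearIndependent ℂ (Fin.cons z.1 z.2 : Fin (k+1) → V) } :=
        hTopen.isClosed_compl.measurableSet
      rw [show (volume : Measure (V × (Fin k → V))) = (volume : Measure V).prod volume from rfl]
      rw [← Measure.prod_swap, Measure.map_apply measurable_swap hTmeas]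
      have hUmeas : MeasurableSet (Prod.swap ⁻¹' { z : V × (Fin k → V) |
          ¬ LinearIndependent ℂ (Fin.cons z.1 z.2 : Fin (k+1) → V) }) :=
        hTmeas.preimage measurable_swap
      rw [Measure.measure_prod_null hUmeas]
      filter_upwards [IH] with w hw
      have hsub : (Prod.mk w ⁻¹' (Prod.swap ⁻¹' { z : V × (Fin k → V) |
          ¬ LinearIndependent ℂ (Fin.cons z.1 z.2 : Fin (k+1) → V) })) ⊆
          ((Submodule.span ℂ (Set.range w)).restrictScalars ℝ : Set V) := by
        intro t ht
        simp only [Set.mem_preimage, Prod.swap_prod_mk, Set.mem_setOf_eq] at ht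
        rw [linearIndependent_fin_cons] at ht
        push_neg at ht
        exact ht hw
      refine measure_mono_null hsub ?_
      apply Measure.addHaar_submodule
      rw [Ne, Submodule.restrictScalars_eq_top_iff]
      intro htop
      have h1 : finrank ℂ (Submodule.span ℂ (Set.range w)) ≤ k := by
        refine (finrank_span_le_card (R := ℂ) (Set.range w)).trans ?_
        simpa using Finset.card_image_le (f := w) (s := Finset.univ)
      rw [htop, finrank_top] at h1
      have : finrank ℂ V = n := by simp [V, Module.finrank_pi]
      omega
    · exact hTopen.isClosed_compl.measurableSet.nullMeasurableSet


theorem aux_finrank_sup_le {ι : Type*} {V : Type*} [AddCommGroup V] [Module ℂ V]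
    [FiniteDimensional ℂ V] (s : Finset ι) (f : ι → Submodule ℂ V) :
    finrank ℂ ↥(Finset.sup s f : Submodule ℂ V) ≤ ∑ i ∈ s, finrank ℂ (f i) := by
  classical
  induction s using Finset.induction_on with
  | empty => simp
  | @insert a s hins ih =>
    rw [Finset.sup_insert, Finset.sum_insert hins]
    have h := Submodule.finrank_sup_add_finrank_inf_eq (f a) (Finset.sup s f)
    omega

/-- colum extraction as a linear map -/
def colMap (m1 m2 : ℕ) (j : Fin m2) : Matrix (Fin m1) (Fin m2) ℂ →ₗ[ℂ] (Fin m1 → ℂ) where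
  toFun M := fun i => M i j
  map_add' M N := rfl
  map_smul' c M := rfl

theorem aux_main (n1 n2 m1 m2 r : ℕ) (hn : n2 < n1)
    (γ : Fin (n1 - n2) → Fin n1 → ℂ) (hγ : LinearIndependent ℂ γ)
    (A : Fin n1 → Matrix (Fin m1) (Fin m2) ℂ)
    (hrank : ∀ k : Fin n1, (A k).rank ≤ r)
    (hrel : ∀ i : Fin (n1 - n2), ∑ k : Fin n1, γ i k • A k = 0) :
    Module.finrank ℂ
      (Submodule.span ℂ
        (Set.range fun p : Fin n1 × Fin m2 =>
          fun i : Fin m1 => A p.1 i p.2)) ≤ n2 * r := by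
  classical
  set L := Fintype.linearCombination ℂ A with hL
  have hker : Submodule.span ℂ (Set.range γ) ≤ LinearMap.ker L := by
    rw [Submodule.span_le]
    rintro x ⟨i, rfl⟩
    simpa [L, Fintype.linearCombination_apply] using hrel i
  have hq : n1 - n2 ≤ finrank ℂ (LinearMap.ker L) := by
    have h1 : finrank ℂ (Submodule.span ℂ (Set.range γ)) = n1 - n2 := by
      simpa using finrank_span_eq_card hγ
    calc n1 - n2 = finrank ℂ (Submodule.span ℂ (Set.range γ)) := h1.symm
      _ ≤ finrank ℂ (LinearMap.ker L) := Submodule.finrank_mono hker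
  have hrn := LinearMap.finrank_range_add_finrank_ker L
  rw [Module.finrank_fin_fun] at hrn
  have hWle : finrank ℂ (LinearMap.range L) ≤ n2 := by omega
  have hspanA : Submodule.span ℂ (Set.range A) = LinearMap.range L :=
    (Fintype.range_linearCombination ℂ A).symm
  obtain ⟨t, hts, hspan, hli⟩ := exists_linearIndependent ℂ (Set.range A)
  have htfin : t.Finite := hli.finite
  have hcard : htfin.toFinset.card ≤ n2 := by
    haveI := htfin.fintype
    have h1 : finrank ℂ (Submodule.span ℂ t) = t.toFinset.card :=
      finrank_span_set_eq_card hli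
    rw [hspan, hspanA] at h1
    rw [Set.Finite.card_toFinset]
    have h3 : t.toFinset.card = Fintype.card ↑t := Set.toFinset_card t
    omega
  set F : Matrix (Fin m1) (Fin m2) ℂ → Submodule ℂ (Fin m1 → ℂ) :=
    fun B => Submodule.span ℂ (Set.range Bᵀ) with hF
  have hTle : Submodule.span ℂ
      (Set.range fun p : Fin n1 × Fin m2 => fun i : Fin m1 => A p.1 i p.2) ≤
      htfin.toFinset.sup F := by
    rw [Submodule.span_le]
    rintro x ⟨⟨k, j⟩, rfl⟩
    have hAk : A k ∈ Submodule.span ℂ t := by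
      rw [hspan]; exact Submodule.subset_span (Set.mem_range_self k)
    have h1 : colMap m1 m2 j (A k) ∈ (Submodule.span ℂ t).map (colMap m1 m2 j) :=
      Submodule.mem_map_of_mem hAk
    rw [Submodule.map_span] at h1
    have h2 : Submodule.span ℂ (colMap m1 m2 j '' t) ≤ htfin.toFinset.sup F := by
      rw [Submodule.span_le]
      rintro y ⟨B, hB, rfl⟩
      have hle : F B ≤ htfin.toFinset.sup F := Finset.le_sup (htfin.mem_toFinset.2 hB)
      exact hle (Submodule.subset_span ⟨j, rfl⟩)
    exact h2 h1
  have hV : finrank ℂ ↥(Finset.sup htfin.toFinset F : Submodule ℂ (Fin m1 → ℂ)) ≤ n2 * r := by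
    calc finrank ℂ ↥(Finset.sup htfin.toFinset F : Submodule ℂ (Fin m1 → ℂ)) ≤ ∑ B ∈ htfin.toFinset, finrank ℂ (F B) :=
          aux_finrank_sup_le _ _
      _ ≤ ∑ _B ∈ htfin.toFinset, r := by
          refine Finset.sum_le_sum fun B hB => ?_
          obtain ⟨k, rfl⟩ := hts (htfin.mem_toFinset.1 hB)
          rw [hF]
          calc finrank ℂ (Submodule.span ℂ (Set.range (A k)ᵀ)) = (A k).rank :=
                (Matrix.rank_eq_finrank_span_cols (A k)).symm
            _ ≤ r := hrank k
      _ = htfin.toFinset.card * r := by rw [Finset.sum_const, smul_eq_mul]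
      _ ≤ n2 * r := Nat.mul_le_mul_right r hcard
  exact (Submodule.finrank_mono hTle).trans hV

/-- For Lebesgue-almost every coefficient array `γ ∈ ℂ^{q × n1}`
(`q = n1 - n2`, `0 ≤ n2 < n1`), every family `A_1,…,A_{n1}` of complex `m1 × m2`
matrices of rank at most `r` with `γ_{i1} A_1 + ⋯ + γ_{i n1} A_{n1} = 0` for all
`i = 1,…,q` satisfies `dim C(A_1,…,A_{n1}) ≤ n2 · r`. -/
theorem stmt3 (n1 n2 m1 m2 r : ℕ) (hn : n2 < n1) :
    ∀ᵐ γ : Fin (n1 - n2) → Fin n1 → ℂ,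
      ∀ A : Fin n1 → Matrix (Fin m1) (Fin m2) ℂ,
        (∀ k : Fin n1, (A k).rank ≤ r) →
        (∀ i : Fin (n1 - n2), ∑ k : Fin n1, γ i k • A k = 0) →
        Module.finrank ℂ
          (Submodule.span ℂ
            (Set.range fun p : Fin n1 × Fin m2 =>
              fun i : Fin m1 => A p.1 i p.2)) ≤ n2 * r := by
  filter_upwards [aux_ae_li n1 (n1 - n2) (Nat.sub_le n1 n2)] with γ hγ
  intro A hrank hrel
  exact aux_main n1 n2 m1 m2 r hn γ hγ A hrank hrel
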